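/- Let 𝒢 = (G_1, …, G_τ) be a graph history on a finite vertex set V with |V| = n, and let S_0 = V, S_i = S_{i-1} \ {v_i} (i = 1, …, n−1) be a score_m peeling sequence, i.e. at each step v_i attains the minimum of score_m(·, 𝒢[S_{i-1}]) over S_{i-1}. Let S* ⊆ V be any nonempty subset such that some removed vertex v_i belongs to S*, and let i be the least index with v_i ∈ S*. Then S* ⊆ S_{i-1} and f_mm(S_{i-1}, 𝒢) ≥ f_mm(S*, 𝒢). -/
import Mathlib


open scoped Classical
open Finset

/-- The degree of `u` in the subgraph of `G` induced by the vertex set `S`. -/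
noncomputable def degIn {n : ℕ} (G : SimpleGraph (Fin n)) (S : Finset (Fin n)) (u : Fin n) : ℕ :=
  (S.filter fun v => G.Adj u v).card

/-- The number of edges of the subgraph of `G` induced by `S`. -/
noncomputable def edgesIn {n : ℕ} (G : SimpleGraph (Fin n)) (S : Finset (Fin n)) : ℕ :=
  ((S ×ˢ S).filter fun p => p.1 < p.2 ∧ G.Adj p.1 p.2).card

/-- Minimum density `d_m(S, G)`: the minimum degree in the induced subgraph `G[S]`. -/
noncomputable def minDensity {n : ℕ} (G : SimpleGraph (Fin n)) (S : Finset (Fin n)) : ℕ :=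
  sInf ((fun u => degIn G S u) '' (S : Set (Fin n)))

/-- Average density `d_a(S, G) = 2·|E(G[S])| / |S|`. -/
noncomputable def avgDensity {n : ℕ} (G : SimpleGraph (Fin n)) (S : Finset (Fin n)) : ℝ :=
  2 * (edgesIn G S : ℝ) / (S.card : ℝ)

/-- `f_mm(S, 𝒢) = min_t d_m(S, G_t)`. -/
noncomputable def fmm {n τ : ℕ} (G : Fin τ → SimpleGraph (Fin n)) (S : Finset (Fin n)) : ℕ :=
  sInf (Set.range fun t => minDensity (G t) S)

/-- `f_am(S, 𝒢) = (1/τ) · Σ_t d_m(S, G_t)`. -/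
noncomputable def fam {n τ : ℕ} (G : Fin τ → SimpleGraph (Fin n)) (S : Finset (Fin n)) : ℝ :=
  (1 / (τ : ℝ)) * ∑ t, (minDensity (G t) S : ℝ)

/-- `f_ma(S, 𝒢) = min_t d_a(S, G_t)`. -/
noncomputable def fma {n τ : ℕ} (G : Fin τ → SimpleGraph (Fin n)) (S : Finset (Fin n)) : ℝ :=
  sInf (Set.range fun t => avgDensity (G t) S)

/-- `f_aa(S, 𝒢) = (1/τ) · Σ_t d_a(S, G_t)`. -/
noncomputable def faa {n τ : ℕ} (G : Fin τ → SimpleGraph (Fin n)) (S : Finset (Fin n)) : ℝ :=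
  (1 / (τ : ℝ)) * ∑ t, avgDensity (G t) S

/-- `score_m(v, 𝒢[S]) = min_t degree(v, G_t[S])`. -/
noncomputable def scoreM {n τ : ℕ} (G : Fin τ → SimpleGraph (Fin n)) (S : Finset (Fin n))
    (v : Fin n) : ℕ :=
  sInf (Set.range fun t => degIn (G t) S v)

/-- `score_a(v, 𝒢[S]) = (1/τ) · Σ_t degree(v, G_t[S])`. -/
noncomputable def scoreA {n τ : ℕ} (G : Fin τ → SimpleGraph (Fin n)) (S : Finset (Fin n))
    (v : Fin n) : ℝ :=
  (1 / (τ : ℝ)) * ∑ t, (degIn (G t) S v : ℝ)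

/-- A `score_m` peeling sequence: `S 0 = V`, and at each step the removed vertex `v i`
minimizes `score_m` over the current set. -/
def IsScoreMPeeling {n τ : ℕ} (G : Fin τ → SimpleGraph (Fin n)) (S : ℕ → Finset (Fin n))
    (v : ℕ → Fin n) : Prop :=
  S 0 = Finset.univ ∧
    ∀ i < n - 1, v i ∈ S i ∧ S (i + 1) = S i \ {v i} ∧
      ∀ u ∈ S i, scoreM G (S i) (v i) ≤ scoreM G (S i) u

/-- A `score_a` peeling sequence: `S 0 = V`, and at each step the removed vertex `v i`
minimizes `score_a` over the current set. -/
def IsScoreAPeeling {n τ : ℕ} (G : Fin τ → SimpleGraph (Fin n)) (S : ℕ → Finset (Fin n))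
    (v : ℕ → Fin n) : Prop :=
  S 0 = Finset.univ ∧
    ∀ i < n - 1, v i ∈ S i ∧ S (i + 1) = S i \ {v i} ∧
      ∀ u ∈ S i, scoreA G (S i) (v i) ≤ scoreA G (S i) u

/-- In a `score_m` peeling sequence, if `S*` is a nonempty subset containing
some removed vertex and `j` is the least index of a removed vertex of `S*`, then `S* ⊆ S j`
(the set from which `v j` is removed) and `f_mm(S j, 𝒢) ≥ f_mm(S*, 𝒢)`. -/
theorem bff_mm_peeling_step {n τ : ℕ} (hτ : 0 < τ)
    (G : Fin τ → SimpleGraph (Fin n)) (S : ℕ → Finset (Fin n)) (v : ℕ → Fin n)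
    (hpeel : IsScoreMPeeling G S v)
    (Sstar : Finset (Fin n)) (hSstar : Sstar.Nonempty)
    (j : ℕ) (hj : j < n - 1) (hvj : v j ∈ Sstar) (hleast : ∀ i < j, v i ∉ Sstar) :
    Sstar ⊆ S j ∧ fmm G Sstar ≤ fmm G (S j) := by
  obtain ⟨h0, hstep⟩ := hpeel
  haveI : Nonempty (Fin τ) := ⟨⟨0, hτ⟩⟩
  -- Sstar ⊆ S j
  have hsub : Sstar ⊆ S j := by
    have key : ∀ k, k ≤ j → Sstar ⊆ S k := by
      intro k hk
      induction k with
      | zero => simp [h0]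
      | succ m ih =>
        have hm : m < j := Nat.lt_of_succ_le hk
        have hmn : m < n - 1 := lt_trans hm hj
        obtain ⟨_, hSm1, _⟩ := hstep m hmn
        rw [hSm1]
        intro x hx
        rw [Finset.mem_sdiff]
        exact ⟨ih (le_of_lt hm) hx, by
          simp only [Finset.mem_singleton]
          intro hxv
          exact hleast m hm (hxv ▸ hx)⟩
    exact key j le_rfl
  refine ⟨hsub, ?_⟩
  obtain ⟨hvjSj, _, hmin⟩ := hstep j hj
  have hvjS : v j ∈ S j := hsub hvj
  -- step a: fmm G Sstar ≤ scoreM G Sstar (v j)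
  have ha : fmm G Sstar ≤ scoreM G Sstar (v j) := by
    have hne : (Set.range fun t => degIn (G t) Sstar (v j)).Nonempty := Set.range_nonempty _
    obtain ⟨t0, ht0⟩ := Nat.sInf_mem hne
    calc fmm G Sstar ≤ minDensity (G t0) Sstar :=
          Nat.sInf_le ⟨t0, rfl⟩
      _ ≤ degIn (G t0) Sstar (v j) :=
          Nat.sInf_le ⟨v j, by exact_mod_cast hvj, rfl⟩
      _ = scoreM G Sstar (v j) := ht0
  -- step b: scoreM G Sstar (v j) ≤ scoreM G (S j) (v j)
  have hb : scoreM G Sstar (v j) ≤ scoreM G (S j) (v j) := by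
    have hne : (Set.range fun t => degIn (G t) (S j) (v j)).Nonempty := Set.range_nonempty _
    obtain ⟨t1, ht1⟩ := Nat.sInf_mem hne
    calc scoreM G Sstar (v j) ≤ degIn (G t1) Sstar (v j) := Nat.sInf_le ⟨t1, rfl⟩
      _ ≤ degIn (G t1) (S j) (v j) :=
          Finset.card_le_card (Finset.filter_subset_filter _ hsub)
      _ = scoreM G (S j) (v j) := ht1
  -- step c: scoreM G (S j) (v j) ≤ fmm G (S j)
  have hc : scoreM G (S j) (v j) ≤ fmm G (S j) := by
    apply le_csInf (Set.range_nonempty _)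
    rintro x ⟨t, rfl⟩
    have hne : ((fun u => degIn (G t) (S j) u) '' ((S j : Set (Fin n)))).Nonempty := by
      exact ⟨_, Set.mem_image_of_mem _ (by exact_mod_cast hvjS)⟩
    obtain ⟨u, hu, huEq⟩ := Nat.sInf_mem hne
    have huS : u ∈ S j := by exact_mod_cast hu
    calc scoreM G (S j) (v j) ≤ scoreM G (S j) u := hmin u huS
      _ ≤ degIn (G t) (S j) u := Nat.sInf_le ⟨t, rfl⟩
      _ = minDensity (G t) (S j) := huEq
  exact le_trans ha (le_trans hb hc)
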